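/- Let P be a GPEA with unitizing automorphism γ and let U be the γ-unitization of P. Then P is a normal Riesz ideal in U iff P is upward directed. -/

import Mathlib

open scoped Classical

/-- A generalized pseudo effect algebra: partial orthosummation modeled via `Option`. -/
structure GPEA (P : Type*) where
  oplus : P → P → Option P
  zero : P
  assoc₁ : ∀ {a b c ab s : P}, oplus a b = some ab → oplus ab c = some s →
    ∃ bc, oplus b c = some bc ∧ oplus a bc = some s
  assoc₂ : ∀ {a b c bc s : P}, oplus b c = some bc → oplus a bc = some s →
    ∃ ab, oplus a b = some ab ∧ oplus ab c = some s
  conj : ∀ {a b s : P}, oplus a b = some s →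
    (∃ c, oplus c a = some s) ∧ (∃ d, oplus b d = some s)
  cancel_right : ∀ {a b c s : P}, oplus a c = some s → oplus b c = some s → a = b
  cancel_left : ∀ {a b c s : P}, oplus c a = some s → oplus c b = some s → a = b
  oplus_zero : ∀ a : P, oplus a zero = some a
  zero_oplus : ∀ a : P, oplus zero a = some a
  pos : ∀ {a b : P}, oplus a b = some zero → a = zero ∧ b = zero

namespace GPEA

variable {P Q : Type*}

/-- `a ≤ b` iff there is `c` with `a ⊕ c = b`. -/
def le (G : GPEA P) (a b : P) : Prop := ∃ c, G.oplus a c = some b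

/-- `a ≤ b` (left version) iff there is `d` with `d ⊕ a = b`. -/
def leL (G : GPEA P) (a b : P) : Prop := ∃ d, G.oplus d a = some b

/-- An ideal: a nonempty, downward closed subset closed under existing orthosums. -/
def IsIdeal (G : GPEA P) (I : Set P) : Prop :=
  I.Nonempty ∧ (∀ a ∈ I, ∀ b : P, G.le b a → b ∈ I) ∧
    (∀ a ∈ I, ∀ b ∈ I, ∀ s : P, G.oplus a b = some s → s ∈ I)

/-- A normal ideal: `a ⊕ c = c ⊕ b` implies `a ∈ I ↔ b ∈ I`. -/
def IsNormalIdeal (G : GPEA P) (I : Set P) : Prop :=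
  G.IsIdeal I ∧ ∀ a b c s : P, G.oplus a c = some s → G.oplus c b = some s → (a ∈ I ↔ b ∈ I)

/-- Condition (R1) for an ideal. -/
def R1 (G : GPEA P) (I : Set P) : Prop :=
  ∀ i ∈ I, ∀ a b s : P, G.oplus a b = some s → G.le i s →
    ∃ j ∈ I, ∃ k ∈ I, G.le j a ∧ G.le k b ∧ ∃ t, G.oplus j k = some t ∧ G.le i t

/-- Condition (R2) for an ideal. -/
def R2 (G : GPEA P) (I : Set P) : Prop :=
  ∀ i ∈ I, ∀ a : P, G.le i a →
    (∀ b x s : P, G.oplus x i = some a → G.oplus x b = some s →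
      ∃ j ∈ I, G.le j b ∧ ∀ c, G.oplus j c = some b → ∃ t, G.oplus a c = some t) ∧
    (∀ b y s : P, G.oplus i y = some a → G.oplus b y = some s →
      ∃ k ∈ I, G.le k b ∧ ∀ z, G.oplus z k = some b → ∃ t, G.oplus z a = some t)

/-- A Riesz ideal is an ideal satisfying (R1) and (R2). -/
def IsRieszIdeal (G : GPEA P) (I : Set P) : Prop := G.IsIdeal I ∧ G.R1 I ∧ G.R2 I

/-- A normal Riesz ideal. -/
def IsNormalRieszIdeal (G : GPEA P) (I : Set P) : Prop := G.IsNormalIdeal I ∧ G.R1 I ∧ G.R2 I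

/-- A GPEA-morphism. -/
def IsMorphism (G : GPEA P) (H : GPEA Q) (φ : P → Q) : Prop :=
  ∀ a b s : P, G.oplus a b = some s → H.oplus (φ a) (φ b) = some (φ s)

/-- A unitizing GPEA-automorphism: a GPEA-automorphism `γ` such that
`γa ⊕ b` is defined iff `b ⊕ a` is defined. -/
def IsUnitizing (G : GPEA P) (γ : P → P) : Prop :=
  Function.Bijective γ ∧ G.IsMorphism G γ ∧
    (∀ a b : P, (∃ s, G.oplus (γ a) (γ b) = some s) → ∃ t, G.oplus a b = some t) ∧
    (∀ a b : P, (∃ s, G.oplus (γ a) b = some s) ↔ ∃ t, G.oplus b a = some t)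

/-- A weak congruence. -/
def IsWeakCong (G : GPEA P) (r : P → P → Prop) : Prop :=
  Equivalence r ∧ ∀ a b a₁ b₁ s s₁ : P, G.oplus a b = some s → G.oplus a₁ b₁ = some s₁ →
    r a a₁ → r b b₁ → r s s₁

/-- Condition (C3): a weak congruence satisfying it is a congruence. -/
def C3 (G : GPEA P) (r : P → P → Prop) : Prop :=
  ∀ a b s : P, G.oplus a b = some s →
    (∀ a₁, r a a₁ → ∃ b₁, r b b₁ ∧ ∃ t, G.oplus a₁ b₁ = some t) ∧
    (∀ b₂, r b b₂ → ∃ a₂, r a a₂ ∧ ∃ t, G.oplus a₂ b₂ = some t)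

/-- Condition (C4). -/
def C4 (G : GPEA P) (r : P → P → Prop) : Prop :=
  ∀ a b a₁ b₁ s t : P, r a b →
    ((G.oplus a a₁ = some s ∧ G.oplus b b₁ = some t ∧ r s t) ∨
      (G.oplus a₁ a = some s ∧ G.oplus b₁ b = some t ∧ r s t)) → r a₁ b₁

/-- Condition (C5'). -/
def C5' (G : GPEA P) (r : P → P → Prop) : Prop :=
  ∀ a b c s : P, G.oplus b c = some s → r a s →
    ∃ a₁ a₂, r a₁ b ∧ r a₂ c ∧ G.oplus a₁ a₂ = some a

/-- Condition (CR): here `a \ c` is the unique `x` with `x ⊕ c = a`. -/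
def CR (G : GPEA P) (r : P → P → Prop) : Prop :=
  ∀ a b : P, r a b → ∃ c d : P,
    G.le c a ∧ G.le a d ∧ G.le c b ∧ G.le b d ∧
    (∀ x, G.oplus x c = some a → r x G.zero) ∧
    (∀ x, G.oplus x c = some b → r x G.zero) ∧
    (∀ x, G.oplus x a = some d → r x G.zero) ∧
    (∀ x, G.oplus x b = some d → r x G.zero)

/-- A Riesz congruence: a congruence satisfying (C4), (C5') and (CR). -/
def IsRieszCong (G : GPEA P) (r : P → P → Prop) : Prop :=
  G.IsWeakCong r ∧ G.C3 r ∧ G.C4 r ∧ G.C5' r ∧ G.CR r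

/-- The relation `∼_I` induced by an ideal `I`: `a ∼_I b` iff there are
`i, j ∈ I` with `i ≤ a`, `j ≤ b` and `a \ i = b \ j`. -/
def simI (G : GPEA P) (I : Set P) (a b : P) : Prop :=
  ∃ i ∈ I, ∃ j ∈ I, ∃ d : P, G.oplus d i = some a ∧ G.oplus d j = some b

/-- Condition (GCR) for the relation `∼_I`. -/
def GCR (G : GPEA P) (I : Set P) : Prop :=
  ∀ a b : P, G.simI I a b → ∃ i ∈ I, ∃ j ∈ I, ∃ s, G.oplus i a = some s ∧ G.oplus j b = some s

/-- The Riesz decomposition property. -/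
def RDP (G : GPEA P) : Prop :=
  ∀ a b c d s : P, G.oplus a b = some s → G.oplus c d = some s →
    ∃ e₁₁ e₁₂ e₂₁ e₂₂ : P, G.oplus e₁₁ e₁₂ = some a ∧ G.oplus e₂₁ e₂₂ = some b ∧
      G.oplus e₁₁ e₂₁ = some c ∧ G.oplus e₁₂ e₂₂ = some d

end GPEA

/-- A pseudo effect algebra: a GPEA with a largest element `1`. -/
structure PEA (P : Type*) extends GPEA P where
  one : P
  le_one : ∀ a : P, ∃ c, oplus a c = some one
  le_one' : ∀ a : P, ∃ d, oplus d a = some one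

namespace PEA

variable {P : Type*}

/-- The right supplement `a˜`: the unique element with `a ⊕ a˜ = 1`. -/
noncomputable def rsup (U : PEA P) (a : P) : P := Classical.choose (U.le_one a)

/-- The left supplement `a⁻`: the unique element with `a⁻ ⊕ a = 1`. -/
noncomputable def lsup (U : PEA P) (a : P) : P := Classical.choose (U.le_one' a)

/-- A state on a PEA. -/
def IsState (U : PEA P) (s : P → ℝ) : Prop :=
  (∀ a : P, 0 ≤ s a ∧ s a ≤ 1) ∧ s U.one = 1 ∧
    ∀ a b c : P, U.oplus a b = some c → s c = s a + s b

end PEA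

/-- `U` is a binary unitization of the GPEA `G` via the embedding `ι`. -/
def IsBinaryUnitization {P Q : Type*} (G : GPEA P) (U : PEA Q) (ι : P → Q) : Prop :=
  Function.Injective ι ∧ ι G.zero = U.toGPEA.zero ∧
    (∀ a b : P, U.oplus (ι a) (ι b) = (G.oplus a b).map ι) ∧
    (∀ a : P, U.one ≠ ι a) ∧
    (∀ x y : Q, x ∉ Set.range ι → y ∉ Set.range ι → U.oplus x y = none)

/-- The orthosummation of the `γ`-unitization on `P ⊕ P`
(`Sum.inl a` is `a ∈ P`, `Sum.inr b` is `ηb`). -/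
noncomputable def uop {P : Type*} (G : GPEA P) (γ : P → P) :
    P ⊕ P → P ⊕ P → Option (P ⊕ P)
  | .inl a, .inl b => (G.oplus a b).map .inl
  | .inl a, .inr b => if h : G.leL a b then some (.inr (Classical.choose h)) else none
  | .inr a, .inl b => if h : G.le (γ b) a then some (.inr (Classical.choose h)) else none
  | .inr _, .inr _ => none

/-- A PEA-isomorphism. -/
def IsPEAIso {A B : Type*} (U : PEA A) (V : PEA B) (φ : A → B) : Prop :=
  Function.Bijective φ ∧
    (∀ a b s : A, U.oplus a b = some s → V.oplus (φ a) (φ b) = some (φ s)) ∧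
    (∀ a b : A, (∃ s, V.oplus (φ a) (φ b) = some s) → ∃ t, U.oplus a b = some t) ∧
    φ U.one = V.one

/-- The coordinatewise orthosummation on `I → P`. -/
noncomputable def piOplus {P : Type*} {I : Type*} (G : GPEA P) (f g : I → P) :
    Option (I → P) :=
  if h : ∀ i, ∃ s, G.oplus (f i) (g i) = some s then
    some (fun i => Classical.choose (h i)) else none

/-- The extension `∼*` of a relation on `P` to `P ⊕ P`. -/
def rstar {P : Type*} (r : P → P → Prop) : P ⊕ P → P ⊕ P → Prop
  | .inl a, .inl b => r a b
  | .inr a, .inr b => r a b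
  | _, _ => False


section AuxStmt14

variable {P : Type*} {G : GPEA P} {γ : P → P}

private lemma shape_ll {a b : P} {x : P ⊕ P} (h : uop G γ (.inl a) (.inl b) = some x) :
    ∃ v, x = .inl v ∧ G.oplus a b = some v := by
  simp only [uop] at h
  rcases hab : G.oplus a b with _ | v <;> rw [hab] at h
  · simp at h
  · exact ⟨v, (Option.some.inj h).symm, rfl⟩

private lemma shape_lr {a b : P} {x : P ⊕ P} (h : uop G γ (.inl a) (.inr b) = some x) :
    ∃ v, x = .inr v ∧ G.oplus v a = some b := by
  simp only [uop] at h
  split_ifs at h with hL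
  exact ⟨Classical.choose hL, (Option.some.inj h).symm, Classical.choose_spec hL⟩

private lemma shape_rl {a b : P} {x : P ⊕ P} (h : uop G γ (.inr a) (.inl b) = some x) :
    ∃ v, x = .inr v ∧ G.oplus (γ b) v = some a := by
  simp only [uop] at h
  split_ifs at h with hL
  exact ⟨Classical.choose hL, (Option.some.inj h).symm, Classical.choose_spec hL⟩

private lemma shape_rr {a b : P} {x : P ⊕ P} (h : uop G γ (.inr a) (.inr b) = some x) :
    False := by
  simp [uop] at h

private lemma encode_ll {a b v : P} (h : G.oplus a b = some v) :
    uop G γ (.inl a) (.inl b) = some (.inl v) := by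
  simp only [uop, h, Option.map_some]

private lemma encode_lr {a v c : P} (h : G.oplus v a = some c) :
    uop G γ (.inl a) (.inr c) = some (.inr v) := by
  have hL : G.leL a c := ⟨v, h⟩
  have hsp := Classical.choose_spec hL
  simp only [uop, dif_pos hL]
  rw [G.cancel_right hsp h]

private lemma encode_rl {a b v : P} (h : G.oplus (γ b) v = some a) :
    uop G γ (.inr a) (.inl b) = some (.inr v) := by
  have hL : G.le (γ b) a := ⟨v, h⟩
  have hsp := Classical.choose_spec hL
  simp only [uop, dif_pos hL]
  rw [G.cancel_left hsp h]

private lemma gamma_zero (hγ : G.IsUnitizing γ) : γ G.zero = G.zero :=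
  G.cancel_left (hγ.2.1 G.zero G.zero G.zero (G.oplus_zero G.zero))
    (G.oplus_zero (γ G.zero))

private lemma gamma_cancel (hγ : G.IsUnitizing γ) {a b c : P}
    (h : G.oplus (γ a) (γ b) = some (γ c)) : G.oplus a b = some c := by
  obtain ⟨t, ht⟩ := hγ.2.2.1 a b ⟨_, h⟩
  have h2 := hγ.2.1 a b t ht
  have h3 : t = c := hγ.1.1 (Option.some.inj (h2.symm.trans h))
  exact h3 ▸ ht

end AuxStmt14

theorem stmt14 {P : Type*} (G : GPEA P) (γ : P → P) (hγ : G.IsUnitizing γ)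
    (U : PEA (P ⊕ P)) (hop : U.toGPEA.oplus = uop G γ)
    (hz : U.toGPEA.zero = Sum.inl G.zero) (ho : U.one = Sum.inr G.zero) :
    U.toGPEA.IsNormalRieszIdeal (Set.range (Sum.inl : P → P ⊕ P)) ↔
      ∀ a b : P, ∃ c, G.le a c ∧ G.le b c := by
  constructor
  · rintro ⟨-, hR1, -⟩ a b
    have hsum : U.toGPEA.oplus (Sum.inr (γ b)) (Sum.inl b) = some (Sum.inr G.zero) := by
      rw [hop]; exact encode_rl (G.oplus_zero (γ b))
    have hle : U.toGPEA.le (Sum.inl a) (Sum.inr G.zero) :=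
      ⟨Sum.inr a, by rw [hop]; exact encode_lr (G.zero_oplus a)⟩
    obtain ⟨j, hjI, k, hkI, hja, hkb, t, hjk, hit⟩ :=
      hR1 (Sum.inl a) ⟨a, rfl⟩ (Sum.inr (γ b)) (Sum.inl b) (Sum.inr G.zero) hsum hle
    obtain ⟨j₀, rfl⟩ := hjI
    obtain ⟨k₀, rfl⟩ := hkI
    obtain ⟨cj, hcj⟩ := hja
    rw [hop] at hcj
    obtain ⟨c₀, hgb⟩ : ∃ c₀, G.oplus (γ b) j₀ = some c₀ := by
      rcases cj with cj | cj
      · obtain ⟨v, hv, -⟩ := shape_ll hcj; exact nomatch hv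
      · obtain ⟨v, hv, h2⟩ := shape_lr hcj
        obtain rfl : γ b = v := by injection hv
        exact ⟨cj, h2⟩
    obtain ⟨m, hjb⟩ : ∃ m, G.oplus j₀ b = some m := (hγ.2.2.2 b j₀).1 ⟨c₀, hgb⟩
    obtain ⟨ck, hck⟩ := hkb
    rw [hop] at hck
    obtain ⟨c', hkc⟩ : ∃ c', G.oplus k₀ c' = some b := by
      rcases ck with ck | ck
      · obtain ⟨v, hv, h2⟩ := shape_ll hck
        obtain rfl : b = v := by injection hv
        exact ⟨ck, h2⟩
      · obtain ⟨v, hv, -⟩ := shape_lr hck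
        exact nomatch hv
    rw [hop] at hjk
    rcases t with t₀ | t₀
    swap
    · obtain ⟨v, hv, -⟩ := shape_ll hjk; exact nomatch hv
    obtain ⟨v, hv, hjk₀⟩ := shape_ll hjk
    obtain rfl : t₀ = v := by injection hv
    obtain ⟨ct, hct⟩ := hit
    rw [hop] at hct
    obtain ⟨u, hau⟩ : ∃ u, G.oplus a u = some t₀ := by
      rcases ct with ct | ct
      · obtain ⟨w, hw, h2⟩ := shape_ll hct
        obtain rfl : t₀ = w := by injection hw
        exact ⟨ct, h2⟩
      · obtain ⟨w, hw, -⟩ := shape_lr hct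
        exact nomatch hw
    obtain ⟨ab, hab1, hab2⟩ := G.assoc₂ hkc hjb
    have hab : t₀ = ab := Option.some.inj (hjk₀.symm.trans hab1)
    rw [← hab] at hab2
    obtain ⟨w, hw1, hw2⟩ := G.assoc₁ hau hab2
    obtain ⟨d, hd⟩ := (G.conj hjb).2
    exact ⟨m, ⟨w, hw2⟩, ⟨d, hd⟩⟩
  · intro hdir
    have hIdeal : U.toGPEA.IsIdeal (Set.range (Sum.inl : P → P ⊕ P)) := by
      refine ⟨⟨Sum.inl G.zero, G.zero, rfl⟩, ?_, ?_⟩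
      · rintro a ⟨a₀, rfl⟩ b ⟨c, hc⟩
        rw [hop] at hc
        rcases b with b₀ | b₀
        · exact ⟨b₀, rfl⟩
        · rcases c with c₀ | c₀
          · obtain ⟨v, hv, -⟩ := shape_rl hc; exact nomatch hv
          · exact (shape_rr hc).elim
      · rintro a ⟨a₀, rfl⟩ b ⟨b₀, rfl⟩ s hs
        rw [hop] at hs
        obtain ⟨v, rfl, -⟩ := shape_ll hs
        exact ⟨v, rfl⟩
    have hNorm : ∀ a b c s : P ⊕ P, U.toGPEA.oplus a c = some s →
        U.toGPEA.oplus c b = some s →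
        (a ∈ Set.range (Sum.inl : P → P ⊕ P) ↔ b ∈ Set.range (Sum.inl : P → P ⊕ P)) := by
      intro a b c s h1 h2
      rw [hop] at h1 h2
      rcases a with a₀ | a₀ <;> rcases b with b₀ | b₀
      · exact iff_of_true ⟨a₀, rfl⟩ ⟨b₀, rfl⟩
      · exfalso
        rcases c with c₀ | c₀
        · obtain ⟨v, rfl, -⟩ := shape_ll h1
          obtain ⟨w, hw, -⟩ := shape_lr h2
          exact nomatch hw
        · obtain ⟨v, rfl, -⟩ := shape_lr h1
          exact shape_rr h2
      · exfalso
        rcases c with c₀ | c₀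
        · obtain ⟨v, rfl, -⟩ := shape_rl h1
          obtain ⟨w, hw, -⟩ := shape_ll h2
          exact nomatch hw
        · exact shape_rr h1
      · exact iff_of_false (by rintro ⟨x, hx⟩; exact nomatch hx)
          (by rintro ⟨x, hx⟩; exact nomatch hx)
    have hR1 : U.toGPEA.R1 (Set.range (Sum.inl : P → P ⊕ P)) := by
      rintro i ⟨i₀, rfl⟩ a b s hs hle
      rw [hop] at hs
      rcases a with a₀ | a₀ <;> rcases b with b₀ | b₀
      · obtain ⟨s₀, rfl, -⟩ := shape_ll hs
        exact ⟨Sum.inl a₀, ⟨a₀, rfl⟩, Sum.inl b₀, ⟨b₀, rfl⟩,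
          ⟨Sum.inl G.zero, by rw [hop]; exact encode_ll (G.oplus_zero a₀)⟩,
          ⟨Sum.inl G.zero, by rw [hop]; exact encode_ll (G.oplus_zero b₀)⟩,
          Sum.inl s₀, by rw [hop]; exact hs, hle⟩
      · obtain ⟨s₀, rfl, hsa⟩ := shape_lr hs
        obtain ⟨cc, hcc⟩ := hle
        rw [hop] at hcc
        obtain ⟨c₀, hc₀⟩ : ∃ c₀, G.oplus s₀ i₀ = some c₀ := by
          rcases cc with cc | cc
          · obtain ⟨v, hv, -⟩ := shape_ll hcc; exact nomatch hv
          · obtain ⟨v, hv, h2⟩ := shape_lr hcc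
            obtain rfl : s₀ = v := by injection hv
            exact ⟨cc, h2⟩
        obtain ⟨u, ⟨v, hbv⟩, ⟨w, hcw⟩⟩ := hdir b₀ c₀
        obtain ⟨t₀, hav, hst⟩ := G.assoc₁ hsa hbv
        obtain ⟨r, hiw, hsr⟩ := G.assoc₁ hc₀ hcw
        have hrt : r = t₀ := G.cancel_left hsr hst
        rw [hrt] at hiw
        exact ⟨Sum.inl a₀, ⟨a₀, rfl⟩, Sum.inl v, ⟨v, rfl⟩,
          ⟨Sum.inl G.zero, by rw [hop]; exact encode_ll (G.oplus_zero a₀)⟩,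
          ⟨Sum.inr u, by rw [hop]; exact encode_lr hbv⟩,
          Sum.inl t₀, by rw [hop]; exact encode_ll hav,
          ⟨Sum.inl w, by rw [hop]; exact encode_ll hiw⟩⟩
      · obtain ⟨s₀, rfl, hgs⟩ := shape_rl hs
        obtain ⟨cc, hcc⟩ := hle
        rw [hop] at hcc
        obtain ⟨c₀, hc₀⟩ : ∃ c₀, G.oplus s₀ i₀ = some c₀ := by
          rcases cc with cc | cc
          · obtain ⟨v, hv, -⟩ := shape_ll hcc; exact nomatch hv
          · obtain ⟨v, hv, h2⟩ := shape_lr hcc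
            obtain rfl : s₀ = v := by injection hv
            exact ⟨cc, h2⟩
        obtain ⟨s₁, rfl⟩ := hγ.1.2 s₀
        obtain ⟨g, rfl⟩ := hγ.1.2 a₀
        have hbs : G.oplus b₀ s₁ = some g := gamma_cancel hγ hgs
        obtain ⟨c₁, hc₁⟩ : ∃ c₁, G.oplus i₀ s₁ = some c₁ := (hγ.2.2.2 s₁ i₀).1 ⟨c₀, hc₀⟩
        obtain ⟨u, ⟨p, hgp⟩, ⟨p', hcp⟩⟩ := hdir g c₁
        obtain ⟨q, hq⟩ := (G.conj hgp).1
        obtain ⟨w, hw⟩ := (G.conj hcp).1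
        obtain ⟨t₁, hqb, hts⟩ := G.assoc₂ hbs hq
        obtain ⟨r₁, hwi, hrs⟩ := G.assoc₂ hc₁ hw
        have hrt : r₁ = t₁ := G.cancel_right hrs hts
        rw [hrt] at hwi
        obtain ⟨m, hm⟩ := (hγ.2.2.2 g q).2 ⟨u, hq⟩
        obtain ⟨d, hd⟩ := (G.conj hwi).2
        exact ⟨Sum.inl q, ⟨q, rfl⟩, Sum.inl b₀, ⟨b₀, rfl⟩,
          ⟨Sum.inr m, by rw [hop]; exact encode_lr hm⟩,
          ⟨Sum.inl G.zero, by rw [hop]; exact encode_ll (G.oplus_zero b₀)⟩,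
          Sum.inl t₁, by rw [hop]; exact encode_ll hqb,
          ⟨Sum.inl d, by rw [hop]; exact encode_ll hd⟩⟩
      · exact (shape_rr hs).elim
    have hR2 : U.toGPEA.R2 (Set.range (Sum.inl : P → P ⊕ P)) := by
      rintro i ⟨i₀, rfl⟩ a hia
      constructor
      · intro b x s hxi hxb
        rw [hop] at hxi hxb
        rcases b with b₀ | b₀
        · refine ⟨Sum.inl b₀, ⟨b₀, rfl⟩,
            ⟨Sum.inl G.zero, by rw [hop]; exact encode_ll (G.oplus_zero b₀)⟩, ?_⟩
          intro c hc
          rw [hop] at hc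
          rcases c with c₀ | c₀
          · obtain ⟨v, hv, h2⟩ := shape_ll hc
            obtain rfl : b₀ = v := by injection hv
            obtain rfl : c₀ = G.zero := G.cancel_left h2 (G.oplus_zero b₀)
            rcases a with a₀ | a₀
            · exact ⟨Sum.inl a₀, by rw [hop]; exact encode_ll (G.oplus_zero a₀)⟩
            · refine ⟨Sum.inr a₀, ?_⟩
              rw [hop]
              exact encode_rl (by rw [gamma_zero hγ]; exact G.zero_oplus a₀)
          · obtain ⟨v, hv, -⟩ := shape_lr hc
            exact nomatch hv
        · rcases x with x₀ | x₀
          · obtain ⟨a₀, rfl, -⟩ := shape_ll hxi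
            obtain ⟨u, ⟨e, hae⟩, ⟨j₀, hbj⟩⟩ := hdir a₀ b₀
            refine ⟨Sum.inl j₀, ⟨j₀, rfl⟩,
              ⟨Sum.inr u, by rw [hop]; exact encode_lr hbj⟩, ?_⟩
            intro c hc
            rw [hop] at hc
            rcases c with c₀ | c₀
            · obtain ⟨v, hv, -⟩ := shape_ll hc; exact nomatch hv
            · obtain ⟨v, hv, hvj⟩ := shape_lr hc
              obtain rfl : b₀ = v := by injection hv
              have hcu : c₀ = u := Option.some.inj (hvj.symm.trans hbj)
              subst hcu
              obtain ⟨d, hd⟩ := (G.conj hae).1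
              exact ⟨Sum.inr d, by rw [hop]; exact encode_lr hd⟩
          · exact (shape_rr hxb).elim
      · intro b y s hiy hby
        rw [hop] at hiy hby
        rcases b with b₀ | b₀
        · refine ⟨Sum.inl b₀, ⟨b₀, rfl⟩,
            ⟨Sum.inl G.zero, by rw [hop]; exact encode_ll (G.oplus_zero b₀)⟩, ?_⟩
          intro z hz
          rw [hop] at hz
          rcases z with z₀ | z₀
          · obtain ⟨v, hv, h2⟩ := shape_ll hz
            obtain rfl : b₀ = v := by injection hv
            obtain rfl : z₀ = G.zero := G.cancel_right h2 (G.zero_oplus b₀)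
            rcases a with a₀ | a₀
            · exact ⟨Sum.inl a₀, by rw [hop]; exact encode_ll (G.zero_oplus a₀)⟩
            · exact ⟨Sum.inr a₀, by rw [hop]; exact encode_lr (G.oplus_zero a₀)⟩
          · obtain ⟨v, hv, -⟩ := shape_rl hz
            exact nomatch hv
        · rcases y with y₀ | y₀
          · obtain ⟨a₀, rfl, -⟩ := shape_ll hiy
            obtain ⟨c, ⟨e, hbe⟩, ⟨f, hgf⟩⟩ := hdir b₀ (γ a₀)
            obtain ⟨w, hw⟩ := (G.conj hbe).1
            obtain ⟨k₀, rfl⟩ := hγ.1.2 w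
            obtain ⟨m, hm⟩ := (hγ.2.2.2 k₀ b₀).1 ⟨c, hw⟩
            refine ⟨Sum.inl k₀, ⟨k₀, rfl⟩,
              ⟨Sum.inr m, by rw [hop]; exact encode_lr hm⟩, ?_⟩
            intro z hz
            rw [hop] at hz
            rcases z with z₀ | z₀
            · obtain ⟨v, hv, -⟩ := shape_ll hz; exact nomatch hv
            · obtain ⟨v, hv, hzv⟩ := shape_rl hz
              obtain rfl : b₀ = v := by injection hv
              have hzc : z₀ = c := Option.some.inj (hzv.symm.trans hw)
              subst hzc
              exact ⟨Sum.inr f, by rw [hop]; exact encode_rl hgf⟩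
          · exact (shape_rr hby).elim
    exact ⟨⟨hIdeal, hNorm⟩, hR1, hR2⟩
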